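/- For even t ≥ 14, the set M' = {((2i + j(t-8)) mod (t-3), i) : i ∈ {0,...,t-4}, j ∈ {0,1}} is a mutual-visibility set of the Cartesian product P_{t-3} □ C_{t-3} of cardinality 2(t-3). -/

import Mathlib

open SimpleGraph

/-- `M` is a mutual-visibility set of `G`: any two vertices of `M` are joined by a
shortest path containing no other vertex of `M`. -/
def IsMutualVisibilitySet {V : Type*} (G : SimpleGraph V) (M : Set V) : Prop :=
  ∀ u ∈ M, ∀ v ∈ M, ∃ p : G.Walk u v, p.IsPath ∧ p.length = G.dist u v ∧
    ∀ w ∈ p.support, w ∈ M → w = u ∨ w = v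

/-- The mutual-visibility number of `G`: the maximum cardinality of a
mutual-visibility set of `G`. -/
noncomputable def mutualVisibilityNumber {V : Type*} (G : SimpleGraph V) : ℕ :=
  sSup {n : ℕ | ∃ M : Set V, IsMutualVisibilitySet G M ∧ M.ncard = n}

/-- The interval `I(u,v)`: the set of vertices lying on shortest `u,v`-paths of `G`. -/
def gInterval {V : Type*} (G : SimpleGraph V) (u v : V) : Set V :=
  {w | ∃ p : G.Walk u v, p.IsPath ∧ p.length = G.dist u v ∧ w ∈ p.support}

/-- The cyclic distance `|n-k|_t = min(|n-k|, t-|n-k|)` on `{0,…,t-1}`. -/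
def cycDist (t : ℕ) (k n : Fin t) : ℕ :=
  min (Nat.dist k.val n.val) (t - Nat.dist k.val n.val)

/-- The cyclic interval `[k,n]_t` on `{0,…,t-1}`. -/
def cycInterval (t : ℕ) (k n : Fin t) : Set (Fin t) :=
  if 2 * cycDist t k n < t then {m : Fin t | m.val ∈ Set.uIcc k.val n.val}
  else if 2 * cycDist t k n = t then Set.univ
  else {m : Fin t | m.val ∉ Set.uIcc k.val n.val} ∪ {k, n}

namespace MVaux

/-- Forbidden residues: z ≡ 0 or z ≡ -5 (mod n). -/
def Fz (n : ℕ) (z : ℤ) : Prop := (n:ℤ) ∣ z ∨ (n:ℤ) ∣ (z + 5)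

lemma Fz_congr {n : ℕ} {w w' : ℤ} (h : (n:ℤ) ∣ (w - w')) : Fz n w ↔ Fz n w' := by
  constructor <;> intro hf <;> rcases hf with h1 | h1
  · refine Or.inl ?_
    have := dvd_sub h1 h; simpa using this
  · refine Or.inr ?_
    have h3 := dvd_sub h1 h
    have h2 : w + 5 - (w - w') = w' + 5 := by ring
    rwa [h2] at h3
  · refine Or.inl ?_
    have := dvd_add h1 h; simpa using this
  · refine Or.inr ?_
    have h3 := dvd_add h1 h
    have h2 : w' + 5 + (w - w') = w + 5 := by ring
    rwa [h2] at h3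

lemma notFz {n : ℕ} {z : ℤ} (hn : 11 ≤ n) (hlo : -2*(n:ℤ) < z) (hhi : z ≤ 2*(n:ℤ))
    (e1 : z ≠ -(n:ℤ)-5) (e2 : z ≠ -(n:ℤ)) (e3 : z ≠ -5) (e4 : z ≠ 0)
    (e5 : z ≠ (n:ℤ)-5) (e6 : z ≠ (n:ℤ)) (e7 : z ≠ 2*(n:ℤ)-5) (e8 : z ≠ 2*(n:ℤ)) :
    ¬ Fz n z := by
  have hn' : (0:ℤ) < (n:ℤ) := by exact_mod_cast Nat.pos_of_ne_zero (by omega)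
  rintro (⟨c, hc⟩ | ⟨c, hc⟩)
  · have h1 : (-2 : ℤ) < c := by
      by_contra h; push_neg at h
      have : (n:ℤ) * c ≤ (n:ℤ) * (-2) := by
        exact mul_le_mul_of_nonneg_left h (le_of_lt hn')
      omega
    have h2 : c < 3 := by
      by_contra h; push_neg at h
      have : (n:ℤ) * 3 ≤ (n:ℤ) * c := mul_le_mul_of_nonneg_left h (le_of_lt hn')
      omega
    interval_cases c <;> omega
  · have h1 : (-2 : ℤ) < c := by
      by_contra h; push_neg at h
      have : (n:ℤ) * c ≤ (n:ℤ) * (-2) := mul_le_mul_of_nonneg_left h (le_of_lt hn')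
      omega
    have h2 : c < 3 := by
      by_contra h; push_neg at h
      have : (n:ℤ) * 3 ≤ (n:ℤ) * c := mul_le_mul_of_nonneg_left h (le_of_lt hn')
      omega
    interval_cases c <;> omega

/-- All positions strictly after the start (including the final) avoid `Fz`. -/
def Avoid (n : ℕ) (z : ℤ) (l : List ℤ) : Prop :=
  ∀ m : ℕ, 0 < m → m ≤ l.length → ¬ Fz n (z + (l.take m).sum)

lemma avoid_append {n : ℕ} {z : ℤ} {l₁ l₂ : List ℤ} (h1 : Avoid n z l₁)
    (h2 : Avoid n (z + l₁.sum) l₂) : Avoid n z (l₁ ++ l₂) := by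
  intro m hm hml
  rcases le_or_gt m l₁.length with h | h
  · rw [List.take_append_of_le_length h]; exact h1 m hm h
  · rw [List.take_append, List.take_of_length_le (le_of_lt h),
      List.sum_append, ← add_assoc]
    refine h2 (m - l₁.length) (by omega) ?_
    rw [List.length_append] at hml; omega

lemma avoid_append' {n : ℕ} {z : ℤ} {l₁ l₂ : List ℤ} (s : ℤ) (h1 : Avoid n z l₁)
    (hs : z + l₁.sum = s) (h2 : Avoid n s l₂) : Avoid n z (l₁ ++ l₂) :=
  avoid_append h1 (hs ▸ h2)

lemma avoid_replicate {n : ℕ} {z x : ℤ} {k : ℕ}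
    (h : ∀ j : ℕ, 1 ≤ j → j ≤ k → ¬ Fz n (z + x * j)) :
    Avoid n z (List.replicate k x) := by
  intro m hm hml
  rw [List.length_replicate] at hml
  rw [List.take_replicate, min_eq_left hml, List.sum_replicate, nsmul_eq_mul]
  have := h m hm hml
  rwa [mul_comm] at this

lemma avoid_join_replicate {n : ℕ} {z : ℤ} {blk : List ℤ} (hsum : blk.sum = 0)
    (h : Avoid n z blk) (k : ℕ) : Avoid n z (List.flatten (List.replicate k blk)) := by
  induction k with
  | zero => intro m hm hml; simp at hml; omega
  | succ k ih =>
      rw [List.replicate_succ, List.flatten_cons]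
      exact avoid_append' z h (by rw [hsum]; ring) ih

lemma sum_join_replicate (blk : List ℤ) (k : ℕ) :
    (List.flatten (List.replicate k blk)).sum = k * blk.sum := by
  induction k with
  | zero => simp
  | succ k ih => rw [List.replicate_succ, List.flatten_cons, List.sum_append, ih]; push_cast; ring

lemma count_join_replicate (blk : List ℤ) (k : ℕ) (a : ℤ) :
    (List.flatten (List.replicate k blk)).count a = k * blk.count a := by
  induction k with
  | zero => simp
  | succ k ih => rw [List.replicate_succ, List.flatten_cons, List.count_append, ih]; ring

lemma length_join_replicate (blk : List ℤ) (k : ℕ) :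
    (List.flatten (List.replicate k blk)).length = k * blk.length := by
  induction k with
  | zero => simp
  | succ k ih => rw [List.replicate_succ, List.flatten_cons, List.length_append, ih]; ring

lemma mem_join_replicate {blk : List ℤ} {k : ℕ} {x : ℤ}
    (h : x ∈ List.flatten (List.replicate k blk)) : x ∈ blk := by
  induction k with
  | zero => simp at h
  | succ k ih =>
      rw [List.replicate_succ, List.flatten_cons, List.mem_append] at h
      exact h.elim id ih

/-- Count and sum for two-valued lists. -/
lemma two_count {α β : ℤ} (hne : α ≠ β) :
    ∀ (l : List ℤ), (∀ x ∈ l, x = α ∨ x = β) →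
      l.count α + l.count β = l.length ∧ l.sum = α * l.count α + β * l.count β := by
  intro l
  induction l with
  | nil => simp
  | cons x l ih =>
      intro h
      obtain ⟨h1, h2⟩ := ih (fun y hy => h y (List.mem_cons_of_mem _ hy))
      rcases h x List.mem_cons_self with rfl | rfl
      · rw [List.count_cons_self, List.count_cons_of_ne hne]
        constructor
        · simp; omega
        · simp only [List.sum_cons, h2]; push_cast; ring
      · rw [List.count_cons_self, List.count_cons_of_ne hne.symm]
        constructor
        · simp; omega
        · simp only [List.sum_cons, h2]; push_cast; ring

lemma Fz_mirror {n : ℕ} (w : ℤ) : Fz n ((n:ℤ) - 5 - w) ↔ Fz n w := by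
  constructor <;> intro hf <;> rcases hf with h1 | h1
  · refine Or.inr ?_
    have h3 := dvd_sub (Dvd.intro 1 (by ring) : (n:ℤ) ∣ n) h1
    have h2 : (n:ℤ) - ((n:ℤ) - 5 - w) = w + 5 := by ring
    rwa [h2] at h3
  · refine Or.inl ?_
    have h3 := dvd_sub (Dvd.intro 1 (by ring) : (n:ℤ) ∣ n) h1
    have h2 : (n:ℤ) - ((n:ℤ) - 5 - w + 5) = w := by ring
    rwa [h2] at h3
  · refine Or.inr ?_
    have h3 := dvd_sub (Dvd.intro 1 (by ring) : (n:ℤ) ∣ n) h1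
    have h2 : (n:ℤ) - w = ((n:ℤ) - 5 - w) + 5 := by ring
    rwa [← h2]
  · refine Or.inl ?_
    have h3 := dvd_sub (Dvd.intro 1 (by ring) : (n:ℤ) ∣ n) h1
    have h2 : (n:ℤ) - (w + 5) = (n:ℤ) - 5 - w := by ring
    rwa [h2] at h3

lemma eq_n_mul {n X k : ℤ} (hn : 0 < n) (hk : X = n * k) (m : ℤ)
    (hlo : n*m - n < X) (hhi : X < n*m + n) : X = n*m := by
  have h1 : m - 1 < k := by
    refine lt_of_mul_lt_mul_left ?_ hn.le
    rw [mul_sub, mul_one, ← hk]; exact hlo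
  have h2 : k < m + 1 := by
    refine lt_of_mul_lt_mul_left ?_ hn.le
    rw [mul_add, mul_one, ← hk]; exact hhi
  have : k = m := by omega
  rw [hk, this]

lemma cast_mod (a n : ℕ) : ((a % n : ℕ) : ℤ) = (a:ℤ) % (n:ℤ) := by push_cast; ring

lemma sum_map_neg : ∀ (l : List ℤ), (l.map (fun x => -x)).sum = -l.sum := by
  intro l; induction l with
  | nil => simp
  | cons x l ih => simp [ih]; ring

lemma final_of_avoid {n : ℕ} {zs : ℤ} {l' : List ℤ} (x : ℤ) (hA : Avoid n zs l') :
    ∀ m : ℕ, 0 < m → m < (l' ++ [x]).length → ¬ Fz n (zs + ((l' ++ [x]).take m).sum) := by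
  intro m h0 hm
  rw [List.length_append, List.length_cons, List.length_nil] at hm
  rw [List.take_append_of_le_length (by omega)]
  exact hA m h0 (by omega)

lemma avoid_triple {n : ℕ} {z : ℤ} (h2 : ¬ Fz n (z+2)) (h1 : ¬ Fz n (z+1))
    (h0 : ¬ Fz n z) : Avoid n z [2,-1,-1] := by
  intro m hm hml
  simp only [List.length_cons, List.length_nil] at hml
  interval_cases m
  · simpa using h2
  · simpa using h1
  · simpa using h0

lemma mem_flatten_replicate_iff {blk : List ℤ} {k : ℕ} {x : ℤ} :
    x ∈ List.flatten (List.replicate k blk) ↔ (k ≠ 0 ∧ x ∈ blk) := by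
  induction k with
  | zero => simp
  | succ k ih =>
      rw [List.replicate_succ, List.flatten_cons, List.mem_append, ih]
      constructor
      · rintro (h | ⟨-, h⟩) <;> exact ⟨by omega, h⟩
      · rintro ⟨-, h⟩; exact Or.inl h

set_option maxHeartbeats 2000000 in
lemma oneDpos (n : ℕ) (hn : 11 ≤ n) (ho : n % 2 = 1) (β zs ze : ℤ)
    (hβ : β = 1 ∨ β = -1) (hzs : zs = 0 ∨ zs = (n:ℤ)-5) (hze : ze = 0 ∨ ze = (n:ℤ)-5)
    (d D : ℕ) (hd : 2*d + 1 ≤ n) (hD : D ≤ n - 1) (hdD : 0 < d + D)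
    (hcong : (n:ℤ) ∣ (zs + 2*↑d + β*↑D - ze)) :
    ∃ l : List ℤ, (∀ x ∈ l, x = 2 ∨ x = β) ∧ l.count 2 = d ∧ l.length = d + D ∧
      ∀ m : ℕ, 0 < m → m < l.length → ¬ Fz n (zs + (l.take m).sum) := by
  obtain ⟨k, hk⟩ := hcong
  have hn0 : (0:ℤ) < (n:ℤ) := by exact_mod_cast (by omega : 0 < n)
  rcases hβ with rfl | rfl
  · rcases hzs with rfl | rfl
    · rcases hze with rfl | rfl
      · -- (β,zs,ze)=(1,0,0)
        rcases Nat.eq_zero_or_pos d with hd0 | hd1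
        · exfalso
          have hX := eq_n_mul hn0 hk (0) (by push_cast; omega) (by push_cast; omega)
          omega
        rcases Nat.eq_zero_or_pos D with hD0 | hD1
        · exfalso
          have hX := eq_n_mul hn0 hk (0) (by push_cast; omega) (by push_cast; omega)
          omega
        have hX := eq_n_mul hn0 hk (1) (by push_cast; omega) (by push_cast; omega)
        have hXX : 2*d + D = n := by omega
        have htri : 2*d + 5 ≤ n ∨ 2*d + 3 = n ∨ 2*d + 1 = n := by omega
        rcases htri with hs | hs | hs
        · refine ⟨(List.replicate (d-1) (2:ℤ) ++ (List.replicate (n-2*d-4) (1:ℤ) ++ (List.replicate (1) (2:ℤ) ++ (List.replicate (3) (1:ℤ))))) ++ [(1:ℤ)],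
              ?_, ?_, ?_, final_of_avoid _ ?_⟩
          · intro y hy
            simp only [List.mem_append, List.mem_replicate, List.mem_singleton,
              mem_flatten_replicate_iff, List.mem_cons, List.not_mem_nil, or_false] at hy
            tauto
          · simp [List.count_append, List.count_replicate, count_join_replicate] <;> omega
          · simp [List.length_append, List.length_replicate, length_join_replicate] <;> omega
          · refine avoid_append' (2*((n:ℤ))*0+2*(d:ℤ)-2) (avoid_replicate (fun j h1 h2 => by apply notFz hn <;> omega))
              (by simp only [List.sum_replicate, nsmul_eq_mul]; omega) ?_
            refine avoid_append' ((n:ℤ)-6) (avoid_replicate (fun j h1 h2 => by apply notFz hn <;> omega))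
              (by simp only [List.sum_replicate, nsmul_eq_mul]; omega) ?_
            refine avoid_append' ((n:ℤ)-4) (avoid_replicate (fun j h1 h2 => by apply notFz hn <;> omega))
              (by simp only [List.sum_replicate, nsmul_eq_mul]; omega) ?_
            exact avoid_replicate (fun j h1 h2 => by apply notFz hn <;> omega)
        · refine ⟨(List.replicate (d-2) (2:ℤ) ++ (List.replicate (1) (1:ℤ) ++ (List.replicate (2) (2:ℤ) ++ (List.replicate (1) (1:ℤ))))) ++ [(1:ℤ)],
              ?_, ?_, ?_, final_of_avoid _ ?_⟩
          · intro y hy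
            simp only [List.mem_append, List.mem_replicate, List.mem_singleton,
              mem_flatten_replicate_iff, List.mem_cons, List.not_mem_nil, or_false] at hy
            tauto
          · simp [List.count_append, List.count_replicate, count_join_replicate] <;> omega
          · simp [List.length_append, List.length_replicate, length_join_replicate] <;> omega
          · refine avoid_append' (2*(d:ℤ)-4) (avoid_replicate (fun j h1 h2 => by apply notFz hn <;> omega))
              (by simp only [List.sum_replicate, nsmul_eq_mul]; omega) ?_
            refine avoid_append' ((n:ℤ)-6) (avoid_replicate (fun j h1 h2 => by apply notFz hn <;> omega))
              (by simp only [List.sum_replicate, nsmul_eq_mul]; omega) ?_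
            refine avoid_append' ((n:ℤ)-2) (avoid_replicate (fun j h1 h2 => by apply notFz hn <;> omega))
              (by simp only [List.sum_replicate, nsmul_eq_mul]; omega) ?_
            exact avoid_replicate (fun j h1 h2 => by apply notFz hn <;> omega)
        · refine ⟨(List.replicate (d-3) (2:ℤ) ++ (List.replicate (1) (1:ℤ) ++ (List.replicate (2) (2:ℤ)))) ++ [(2:ℤ)],
              ?_, ?_, ?_, final_of_avoid _ ?_⟩
          · intro y hy
            simp only [List.mem_append, List.mem_replicate, List.mem_singleton,
              mem_flatten_replicate_iff, List.mem_cons, List.not_mem_nil, or_false] at hy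
            tauto
          · simp [List.count_append, List.count_replicate, count_join_replicate] <;> omega
          · simp [List.length_append, List.length_replicate, length_join_replicate] <;> omega
          · refine avoid_append' (2*(d:ℤ)-6) (avoid_replicate (fun j h1 h2 => by apply notFz hn <;> omega))
              (by simp only [List.sum_replicate, nsmul_eq_mul]; omega) ?_
            refine avoid_append' ((n:ℤ)-6) (avoid_replicate (fun j h1 h2 => by apply notFz hn <;> omega))
              (by simp only [List.sum_replicate, nsmul_eq_mul]; omega) ?_
            exact avoid_replicate (fun j h1 h2 => by apply notFz hn <;> omega)
      · -- (1,0,n-5)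
        rcases Nat.eq_zero_or_pos D with hD0 | hD1
        · have hX := eq_n_mul hn0 hk (0) (by push_cast; omega) (by push_cast; omega)
          have hXX : 2*d + 5 = n := by omega
          refine ⟨(List.replicate (d-1) (2:ℤ)) ++ [(2:ℤ)],
              ?_, ?_, ?_, final_of_avoid _ ?_⟩
          · intro y hy
            simp only [List.mem_append, List.mem_replicate, List.mem_singleton,
              mem_flatten_replicate_iff, List.mem_cons, List.not_mem_nil, or_false] at hy
            tauto
          · simp [List.count_append, List.count_replicate, count_join_replicate] <;> omega
          · simp [List.length_append, List.length_replicate, length_join_replicate] <;> omega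
          · exact avoid_replicate (fun j h1 h2 => by apply notFz hn <;> omega)
        have htri : 2*d + 7 ≤ n ∨ 2*d + 5 = n ∨ 2*d + 3 = n ∨ 2*d + 1 = n := by omega
        rcases htri with hs | hs | hs | hs
        · have hX := eq_n_mul hn0 hk (0) (by push_cast; omega) (by push_cast; omega)
          have hXX : 2*d + D + 5 = n := by omega
          refine ⟨(List.replicate (d) (2:ℤ) ++ (List.replicate (n-2*d-6) (1:ℤ))) ++ [(1:ℤ)],
              ?_, ?_, ?_, final_of_avoid _ ?_⟩
          · intro y hy
            simp only [List.mem_append, List.mem_replicate, List.mem_singleton,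
              mem_flatten_replicate_iff, List.mem_cons, List.not_mem_nil, or_false] at hy
            tauto
          · simp [List.count_append, List.count_replicate, count_join_replicate] <;> omega
          · simp [List.length_append, List.length_replicate, length_join_replicate] <;> omega
          · refine avoid_append' (2*(d:ℤ)) (avoid_replicate (fun j h1 h2 => by apply notFz hn <;> omega))
              (by simp only [List.sum_replicate, nsmul_eq_mul]; omega) ?_
            exact avoid_replicate (fun j h1 h2 => by apply notFz hn <;> omega)
        · exfalso
          have hX := eq_n_mul hn0 hk (0) (by push_cast; omega) (by push_cast; omega)
          omega
        · have hX := eq_n_mul hn0 hk (1) (by push_cast; omega) (by push_cast; omega)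
          have hXX : D = n - 2 := by omega
          refine ⟨(List.replicate (d-2) (2:ℤ) ++ (List.replicate (1) (1:ℤ) ++ (List.replicate (1) (2:ℤ) ++ (List.replicate (3) (1:ℤ) ++ (List.replicate (1) (2:ℤ) ++ (List.replicate (n-7) (1:ℤ))))))) ++ [(1:ℤ)],
              ?_, ?_, ?_, final_of_avoid _ ?_⟩
          · intro y hy
            simp only [List.mem_append, List.mem_replicate, List.mem_singleton,
              mem_flatten_replicate_iff, List.mem_cons, List.not_mem_nil, or_false] at hy
            tauto
          · simp [List.count_append, List.count_replicate, count_join_replicate] <;> omega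
          · simp [List.length_append, List.length_replicate, length_join_replicate] <;> omega
          · refine avoid_append' (2*(d:ℤ)-4) (avoid_replicate (fun j h1 h2 => by apply notFz hn <;> omega))
              (by simp only [List.sum_replicate, nsmul_eq_mul]; omega) ?_
            refine avoid_append' ((n:ℤ)-6) (avoid_replicate (fun j h1 h2 => by apply notFz hn <;> omega))
              (by simp only [List.sum_replicate, nsmul_eq_mul]; omega) ?_
            refine avoid_append' ((n:ℤ)-4) (avoid_replicate (fun j h1 h2 => by apply notFz hn <;> omega))
              (by simp only [List.sum_replicate, nsmul_eq_mul]; omega) ?_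
            refine avoid_append' ((n:ℤ)-1) (avoid_replicate (fun j h1 h2 => by apply notFz hn <;> omega))
              (by simp only [List.sum_replicate, nsmul_eq_mul]; omega) ?_
            refine avoid_append' ((n:ℤ)+1) (avoid_replicate (fun j h1 h2 => by apply notFz hn <;> omega))
              (by simp only [List.sum_replicate, nsmul_eq_mul]; omega) ?_
            exact avoid_replicate (fun j h1 h2 => by apply notFz hn <;> omega)
        · have hX := eq_n_mul hn0 hk (1) (by push_cast; omega) (by push_cast; omega)
          have hXX : D = n - 4 := by omega
          refine ⟨(List.replicate (d-3) (2:ℤ) ++ (List.replicate (1) (1:ℤ) ++ (List.replicate (2) (2:ℤ) ++ (List.replicate (1) (1:ℤ) ++ (List.replicate (1) (2:ℤ) ++ (List.replicate (n-7) (1:ℤ))))))) ++ [(1:ℤ)],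
              ?_, ?_, ?_, final_of_avoid _ ?_⟩
          · intro y hy
            simp only [List.mem_append, List.mem_replicate, List.mem_singleton,
              mem_flatten_replicate_iff, List.mem_cons, List.not_mem_nil, or_false] at hy
            tauto
          · simp [List.count_append, List.count_replicate, count_join_replicate] <;> omega
          · simp [List.length_append, List.length_replicate, length_join_replicate] <;> omega
          · refine avoid_append' (2*(d:ℤ)-6) (avoid_replicate (fun j h1 h2 => by apply notFz hn <;> omega))
              (by simp only [List.sum_replicate, nsmul_eq_mul]; omega) ?_
            refine avoid_append' ((n:ℤ)-6) (avoid_replicate (fun j h1 h2 => by apply notFz hn <;> omega))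
              (by simp only [List.sum_replicate, nsmul_eq_mul]; omega) ?_
            refine avoid_append' ((n:ℤ)-2) (avoid_replicate (fun j h1 h2 => by apply notFz hn <;> omega))
              (by simp only [List.sum_replicate, nsmul_eq_mul]; omega) ?_
            refine avoid_append' ((n:ℤ)-1) (avoid_replicate (fun j h1 h2 => by apply notFz hn <;> omega))
              (by simp only [List.sum_replicate, nsmul_eq_mul]; omega) ?_
            refine avoid_append' ((n:ℤ)+1) (avoid_replicate (fun j h1 h2 => by apply notFz hn <;> omega))
              (by simp only [List.sum_replicate, nsmul_eq_mul]; omega) ?_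
            exact avoid_replicate (fun j h1 h2 => by apply notFz hn <;> omega)
    · rcases hze with rfl | rfl
      · -- (1,n-5,0)
        rcases Nat.eq_zero_or_pos D with hD0 | hD1
        · exfalso
          have hX := eq_n_mul hn0 hk (1) (by push_cast; omega) (by push_cast; omega)
          omega
        have htri : d ≤ 2 ∨ d = 3 ∨ 4 ≤ d := by omega
        rcases htri with hs | hs | hs
        · have hX := eq_n_mul hn0 hk (1) (by push_cast; omega) (by push_cast; omega)
          have hXX : 2*d + D = 5 := by omega
          refine ⟨(List.replicate (d) (2:ℤ) ++ (List.replicate (4-2*d) (1:ℤ))) ++ [(1:ℤ)],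
              ?_, ?_, ?_, final_of_avoid _ ?_⟩
          · intro y hy
            simp only [List.mem_append, List.mem_replicate, List.mem_singleton,
              mem_flatten_replicate_iff, List.mem_cons, List.not_mem_nil, or_false] at hy
            tauto
          · simp [List.count_append, List.count_replicate, count_join_replicate] <;> omega
          · simp [List.length_append, List.length_replicate, length_join_replicate] <;> omega
          · refine avoid_append' ((n:ℤ)-5+2*(d:ℤ)) (avoid_replicate (fun j h1 h2 => by apply notFz hn <;> omega))
              (by simp only [List.sum_replicate, nsmul_eq_mul]; omega) ?_
            exact avoid_replicate (fun j h1 h2 => by apply notFz hn <;> omega)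
        · have hX := eq_n_mul hn0 hk (2) (by push_cast; omega) (by push_cast; omega)
          have hXX : D = n - 1 := by omega
          refine ⟨(List.replicate (1) (2:ℤ) ++ (List.replicate (2) (1:ℤ) ++ (List.replicate (1) (2:ℤ) ++ (List.replicate (n-7) (1:ℤ) ++ (List.replicate (1) (2:ℤ) ++ (List.replicate (3) (1:ℤ))))))) ++ [(1:ℤ)],
              ?_, ?_, ?_, final_of_avoid _ ?_⟩
          · intro y hy
            simp only [List.mem_append, List.mem_replicate, List.mem_singleton,
              mem_flatten_replicate_iff, List.mem_cons, List.not_mem_nil, or_false] at hy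
            tauto
          · simp [List.count_append, List.count_replicate, count_join_replicate] <;> omega
          · simp [List.length_append, List.length_replicate, length_join_replicate] <;> omega
          · refine avoid_append' ((n:ℤ)-3) (avoid_replicate (fun j h1 h2 => by apply notFz hn <;> omega))
              (by simp only [List.sum_replicate, nsmul_eq_mul]; omega) ?_
            refine avoid_append' ((n:ℤ)-1) (avoid_replicate (fun j h1 h2 => by apply notFz hn <;> omega))
              (by simp only [List.sum_replicate, nsmul_eq_mul]; omega) ?_
            refine avoid_append' ((n:ℤ)+1) (avoid_replicate (fun j h1 h2 => by apply notFz hn <;> omega))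
              (by simp only [List.sum_replicate, nsmul_eq_mul]; omega) ?_
            refine avoid_append' (2*(n:ℤ)-6) (avoid_replicate (fun j h1 h2 => by apply notFz hn <;> omega))
              (by simp only [List.sum_replicate, nsmul_eq_mul]; omega) ?_
            refine avoid_append' (2*(n:ℤ)-4) (avoid_replicate (fun j h1 h2 => by apply notFz hn <;> omega))
              (by simp only [List.sum_replicate, nsmul_eq_mul]; omega) ?_
            exact avoid_replicate (fun j h1 h2 => by apply notFz hn <;> omega)
        · have hX := eq_n_mul hn0 hk (2) (by push_cast; omega) (by push_cast; omega)
          have hXX : 2*d + D = n + 5 := by omega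
          refine ⟨(List.replicate (d-1) (2:ℤ) ++ (List.replicate (n-2*d+1) (1:ℤ) ++ (List.replicate (1) (2:ℤ) ++ (List.replicate (3) (1:ℤ))))) ++ [(1:ℤ)],
              ?_, ?_, ?_, final_of_avoid _ ?_⟩
          · intro y hy
            simp only [List.mem_append, List.mem_replicate, List.mem_singleton,
              mem_flatten_replicate_iff, List.mem_cons, List.not_mem_nil, or_false] at hy
            tauto
          · simp [List.count_append, List.count_replicate, count_join_replicate] <;> omega
          · simp [List.length_append, List.length_replicate, length_join_replicate] <;> omega
          · refine avoid_append' ((n:ℤ)-7+2*(d:ℤ)) (avoid_replicate (fun j h1 h2 => by apply notFz hn <;> omega))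
              (by simp only [List.sum_replicate, nsmul_eq_mul]; omega) ?_
            refine avoid_append' (2*(n:ℤ)-6) (avoid_replicate (fun j h1 h2 => by apply notFz hn <;> omega))
              (by simp only [List.sum_replicate, nsmul_eq_mul]; omega) ?_
            refine avoid_append' (2*(n:ℤ)-4) (avoid_replicate (fun j h1 h2 => by apply notFz hn <;> omega))
              (by simp only [List.sum_replicate, nsmul_eq_mul]; omega) ?_
            exact avoid_replicate (fun j h1 h2 => by apply notFz hn <;> omega)
      · -- (1,n-5,n-5)
        rcases Nat.eq_zero_or_pos d with hd0 | hd1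
        · exfalso
          have hX := eq_n_mul hn0 hk (0) (by push_cast; omega) (by push_cast; omega)
          omega
        rcases Nat.eq_zero_or_pos D with hD0 | hD1
        · exfalso
          have hX := eq_n_mul hn0 hk (0) (by push_cast; omega) (by push_cast; omega)
          omega
        have hX := eq_n_mul hn0 hk (1) (by push_cast; omega) (by push_cast; omega)
        have hXX : 2*d + D = n := by omega
        have htri : d ≤ 2 ∨ 3 ≤ d := by omega
        rcases htri with hs | hs
        · refine ⟨(List.replicate (4) (1:ℤ) ++ (List.replicate (d) (2:ℤ) ++ (List.replicate (n-2*d-5) (1:ℤ)))) ++ [(1:ℤ)],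
              ?_, ?_, ?_, final_of_avoid _ ?_⟩
          · intro y hy
            simp only [List.mem_append, List.mem_replicate, List.mem_singleton,
              mem_flatten_replicate_iff, List.mem_cons, List.not_mem_nil, or_false] at hy
            tauto
          · simp [List.count_append, List.count_replicate, count_join_replicate] <;> omega
          · simp [List.length_append, List.length_replicate, length_join_replicate] <;> omega
          · refine avoid_append' ((n:ℤ)-1) (avoid_replicate (fun j h1 h2 => by apply notFz hn <;> omega))
              (by simp only [List.sum_replicate, nsmul_eq_mul]; omega) ?_
            refine avoid_append' ((n:ℤ)-1+2*(d:ℤ)) (avoid_replicate (fun j h1 h2 => by apply notFz hn <;> omega))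
              (by simp only [List.sum_replicate, nsmul_eq_mul]; omega) ?_
            exact avoid_replicate (fun j h1 h2 => by apply notFz hn <;> omega)
        · refine ⟨(List.replicate (d) (2:ℤ) ++ (List.replicate (n-2*d-1) (1:ℤ))) ++ [(1:ℤ)],
              ?_, ?_, ?_, final_of_avoid _ ?_⟩
          · intro y hy
            simp only [List.mem_append, List.mem_replicate, List.mem_singleton,
              mem_flatten_replicate_iff, List.mem_cons, List.not_mem_nil, or_false] at hy
            tauto
          · simp [List.count_append, List.count_replicate, count_join_replicate] <;> omega
          · simp [List.length_append, List.length_replicate, length_join_replicate] <;> omega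
          · refine avoid_append' ((n:ℤ)-5+2*(d:ℤ)) (avoid_replicate (fun j h1 h2 => by apply notFz hn <;> omega))
              (by simp only [List.sum_replicate, nsmul_eq_mul]; omega) ?_
            exact avoid_replicate (fun j h1 h2 => by apply notFz hn <;> omega)
  · rcases hzs with rfl | rfl
    · rcases hze with rfl | rfl
      · -- (-1,0,0)
        rcases Nat.eq_zero_or_pos d with hd0 | hd1
        · exfalso
          have hX := eq_n_mul hn0 hk (0) (by push_cast; omega) (by push_cast; omega)
          omega
        rcases Nat.eq_zero_or_pos D with hD0 | hD1
        · exfalso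
          have hX := eq_n_mul hn0 hk (0) (by push_cast; omega) (by push_cast; omega)
          omega
        have hX := eq_n_mul hn0 hk (0) (by push_cast; omega) (by push_cast; omega)
        have hXX : D = 2*d := by omega
        have htri : d = 1 ∨ 2 ≤ d := by omega
        rcases htri with hs | hs
        · refine ⟨(List.replicate (1) (2:ℤ) ++ (List.replicate (1) (-1:ℤ))) ++ [(-1:ℤ)],
              ?_, ?_, ?_, final_of_avoid _ ?_⟩
          · intro y hy
            simp only [List.mem_append, List.mem_replicate, List.mem_singleton,
              mem_flatten_replicate_iff, List.mem_cons, List.not_mem_nil, or_false] at hy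
            tauto
          · simp [List.count_append, List.count_replicate, count_join_replicate] <;> omega
          · simp [List.length_append, List.length_replicate, length_join_replicate] <;> omega
          · refine avoid_append' (2) (avoid_replicate (fun j h1 h2 => by apply notFz hn <;> omega))
              (by simp only [List.sum_replicate, nsmul_eq_mul]; omega) ?_
            exact avoid_replicate (fun j h1 h2 => by apply notFz hn <;> omega)
        · refine ⟨(List.replicate (2) (2:ℤ) ++ (List.replicate (1) (-1:ℤ) ++ (List.flatten (List.replicate (d-2) [(2:ℤ),-1,-1]) ++ (List.replicate (2) (-1:ℤ))))) ++ [(-1:ℤ)],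
              ?_, ?_, ?_, final_of_avoid _ ?_⟩
          · intro y hy
            simp only [List.mem_append, List.mem_replicate, List.mem_singleton,
              mem_flatten_replicate_iff, List.mem_cons, List.not_mem_nil, or_false] at hy
            tauto
          · simp [List.count_append, List.count_replicate, count_join_replicate] <;> omega
          · simp [List.length_append, List.length_replicate, length_join_replicate] <;> omega
          · refine avoid_append' (4) (avoid_replicate (fun j h1 h2 => by apply notFz hn <;> omega))
              (by simp only [List.sum_replicate, nsmul_eq_mul]; omega) ?_
            refine avoid_append' (3) (avoid_replicate (fun j h1 h2 => by apply notFz hn <;> omega))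
              (by simp only [List.sum_replicate, nsmul_eq_mul]; omega) ?_
            refine avoid_append' (3) (avoid_join_replicate (by norm_num)
                (avoid_triple (by apply notFz hn <;> omega) (by apply notFz hn <;> omega)
                  (by apply notFz hn <;> omega)) _)
              (by rw [sum_join_replicate]; norm_num) ?_
            exact avoid_replicate (fun j h1 h2 => by apply notFz hn <;> omega)
      · -- (-1,0,n-5)
        rcases Nat.eq_zero_or_pos d with hd0 | hd1
        · have hX := eq_n_mul hn0 hk (-1) (by push_cast; omega) (by push_cast; omega)
          have hXX : D = 5 := by omega
          refine ⟨(List.replicate (4) (-1:ℤ)) ++ [(-1:ℤ)],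
              ?_, ?_, ?_, final_of_avoid _ ?_⟩
          · intro y hy
            simp only [List.mem_append, List.mem_replicate, List.mem_singleton,
              mem_flatten_replicate_iff, List.mem_cons, List.not_mem_nil, or_false] at hy
            tauto
          · simp [List.count_append, List.count_replicate, count_join_replicate] <;> omega
          · simp [List.length_append, List.length_replicate, length_join_replicate] <;> omega
          · exact avoid_replicate (fun j h1 h2 => by apply notFz hn <;> omega)
        rcases Nat.eq_zero_or_pos D with hD0 | hD1
        · have hX := eq_n_mul hn0 hk (0) (by push_cast; omega) (by push_cast; omega)
          have hXX : 2*d + 5 = n := by omega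
          refine ⟨(List.replicate (d-1) (2:ℤ)) ++ [(2:ℤ)],
              ?_, ?_, ?_, final_of_avoid _ ?_⟩
          · intro y hy
            simp only [List.mem_append, List.mem_replicate, List.mem_singleton,
              mem_flatten_replicate_iff, List.mem_cons, List.not_mem_nil, or_false] at hy
            tauto
          · simp [List.count_append, List.count_replicate, count_join_replicate] <;> omega
          · simp [List.length_append, List.length_replicate, length_join_replicate] <;> omega
          · exact avoid_replicate (fun j h1 h2 => by apply notFz hn <;> omega)
        have htri : 2*d + 7 ≤ n ∨ 2*d + 5 = n ∨ 2*d + 3 = n ∨ 2*d + 1 = n := by omega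
        rcases htri with hs | hs | hs | hs
        · have hX := eq_n_mul hn0 hk (-1) (by push_cast; omega) (by push_cast; omega)
          have hXX : D = 2*d + 5 := by omega
          refine ⟨(List.replicate (3) (-1:ℤ) ++ (List.flatten (List.replicate (d-1) [(2:ℤ),-1,-1]) ++ (List.replicate (1) (2:ℤ) ++ (List.replicate (3) (-1:ℤ))))) ++ [(-1:ℤ)],
              ?_, ?_, ?_, final_of_avoid _ ?_⟩
          · intro y hy
            simp only [List.mem_append, List.mem_replicate, List.mem_singleton,
              mem_flatten_replicate_iff, List.mem_cons, List.not_mem_nil, or_false] at hy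
            tauto
          · simp [List.count_append, List.count_replicate, count_join_replicate] <;> omega
          · simp [List.length_append, List.length_replicate, length_join_replicate] <;> omega
          · refine avoid_append' (-3) (avoid_replicate (fun j h1 h2 => by apply notFz hn <;> omega))
              (by simp only [List.sum_replicate, nsmul_eq_mul]; omega) ?_
            refine avoid_append' (-3) (avoid_join_replicate (by norm_num)
                (avoid_triple (by apply notFz hn <;> omega) (by apply notFz hn <;> omega)
                  (by apply notFz hn <;> omega)) _)
              (by rw [sum_join_replicate]; norm_num) ?_
            refine avoid_append' (-1) (avoid_replicate (fun j h1 h2 => by apply notFz hn <;> omega))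
              (by simp only [List.sum_replicate, nsmul_eq_mul]; omega) ?_
            exact avoid_replicate (fun j h1 h2 => by apply notFz hn <;> omega)
        · exfalso
          have hX := eq_n_mul hn0 hk (0) (by push_cast; omega) (by push_cast; omega)
          omega
        · have hX := eq_n_mul hn0 hk (0) (by push_cast; omega) (by push_cast; omega)
          have hXX : D = 2 := by omega
          refine ⟨(List.replicate (d-2) (2:ℤ) ++ (List.replicate (1) (-1:ℤ) ++ (List.replicate (2) (2:ℤ)))) ++ [(-1:ℤ)],
              ?_, ?_, ?_, final_of_avoid _ ?_⟩
          · intro y hy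
            simp only [List.mem_append, List.mem_replicate, List.mem_singleton,
              mem_flatten_replicate_iff, List.mem_cons, List.not_mem_nil, or_false] at hy
            tauto
          · simp [List.count_append, List.count_replicate, count_join_replicate] <;> omega
          · simp [List.length_append, List.length_replicate, length_join_replicate] <;> omega
          · refine avoid_append' (2*(d:ℤ)-4) (avoid_replicate (fun j h1 h2 => by apply notFz hn <;> omega))
              (by simp only [List.sum_replicate, nsmul_eq_mul]; omega) ?_
            refine avoid_append' ((n:ℤ)-8) (avoid_replicate (fun j h1 h2 => by apply notFz hn <;> omega))
              (by simp only [List.sum_replicate, nsmul_eq_mul]; omega) ?_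
            exact avoid_replicate (fun j h1 h2 => by apply notFz hn <;> omega)
        · have hX := eq_n_mul hn0 hk (0) (by push_cast; omega) (by push_cast; omega)
          have hXX : D = 4 := by omega
          refine ⟨(List.replicate (d-3) (2:ℤ) ++ (List.replicate (1) (-1:ℤ) ++ (List.replicate (3) (2:ℤ) ++ (List.replicate (2) (-1:ℤ))))) ++ [(-1:ℤ)],
              ?_, ?_, ?_, final_of_avoid _ ?_⟩
          · intro y hy
            simp only [List.mem_append, List.mem_replicate, List.mem_singleton,
              mem_flatten_replicate_iff, List.mem_cons, List.not_mem_nil, or_false] at hy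
            tauto
          · simp [List.count_append, List.count_replicate, count_join_replicate] <;> omega
          · simp [List.length_append, List.length_replicate, length_join_replicate] <;> omega
          · refine avoid_append' (2*(d:ℤ)-6) (avoid_replicate (fun j h1 h2 => by apply notFz hn <;> omega))
              (by simp only [List.sum_replicate, nsmul_eq_mul]; omega) ?_
            refine avoid_append' ((n:ℤ)-8) (avoid_replicate (fun j h1 h2 => by apply notFz hn <;> omega))
              (by simp only [List.sum_replicate, nsmul_eq_mul]; omega) ?_
            refine avoid_append' ((n:ℤ)-2) (avoid_replicate (fun j h1 h2 => by apply notFz hn <;> omega))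
              (by simp only [List.sum_replicate, nsmul_eq_mul]; omega) ?_
            exact avoid_replicate (fun j h1 h2 => by apply notFz hn <;> omega)
    · rcases hze with rfl | rfl
      · -- (-1,n-5,0)
        rcases Nat.eq_zero_or_pos d with hd0 | hd1
        · have hX := eq_n_mul hn0 hk (0) (by push_cast; omega) (by push_cast; omega)
          have hXX : D = n - 5 := by omega
          refine ⟨(List.replicate (n-6) (-1:ℤ)) ++ [(-1:ℤ)],
              ?_, ?_, ?_, final_of_avoid _ ?_⟩
          · intro y hy
            simp only [List.mem_append, List.mem_replicate, List.mem_singleton,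
              mem_flatten_replicate_iff, List.mem_cons, List.not_mem_nil, or_false] at hy
            tauto
          · simp [List.count_append, List.count_replicate, count_join_replicate] <;> omega
          · simp [List.length_append, List.length_replicate, length_join_replicate] <;> omega
          · exact avoid_replicate (fun j h1 h2 => by apply notFz hn <;> omega)
        rcases Nat.eq_zero_or_pos D with hD0 | hD1
        · exfalso
          have hX := eq_n_mul hn0 hk (1) (by push_cast; omega) (by push_cast; omega)
          omega
        have htri : d ≤ 2 ∨ 3 ≤ d := by omega
        rcases htri with hs | hs
        · have hX := eq_n_mul hn0 hk (0) (by push_cast; omega) (by push_cast; omega)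
          have hXX : D = n + 2*d - 5 := by omega
          refine ⟨(List.replicate (3) (-1:ℤ) ++ (List.flatten (List.replicate (d-1) [(2:ℤ),-1,-1]) ++ (List.replicate (1) (2:ℤ) ++ (List.replicate (n-7) (-1:ℤ))))) ++ [(-1:ℤ)],
              ?_, ?_, ?_, final_of_avoid _ ?_⟩
          · intro y hy
            simp only [List.mem_append, List.mem_replicate, List.mem_singleton,
              mem_flatten_replicate_iff, List.mem_cons, List.not_mem_nil, or_false] at hy
            tauto
          · simp [List.count_append, List.count_replicate, count_join_replicate] <;> omega
          · simp [List.length_append, List.length_replicate, length_join_replicate] <;> omega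
          · refine avoid_append' ((n:ℤ)-8) (avoid_replicate (fun j h1 h2 => by apply notFz hn <;> omega))
              (by simp only [List.sum_replicate, nsmul_eq_mul]; omega) ?_
            refine avoid_append' ((n:ℤ)-8) (avoid_join_replicate (by norm_num)
                (avoid_triple (by apply notFz hn <;> omega) (by apply notFz hn <;> omega)
                  (by apply notFz hn <;> omega)) _)
              (by rw [sum_join_replicate]; norm_num) ?_
            refine avoid_append' ((n:ℤ)-6) (avoid_replicate (fun j h1 h2 => by apply notFz hn <;> omega))
              (by simp only [List.sum_replicate, nsmul_eq_mul]; omega) ?_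
            exact avoid_replicate (fun j h1 h2 => by apply notFz hn <;> omega)
        · have hX := eq_n_mul hn0 hk (1) (by push_cast; omega) (by push_cast; omega)
          have hXX : D = 2*d - 5 := by omega
          refine ⟨(List.replicate (d) (2:ℤ) ++ (List.replicate (2*d-6) (-1:ℤ))) ++ [(-1:ℤ)],
              ?_, ?_, ?_, final_of_avoid _ ?_⟩
          · intro y hy
            simp only [List.mem_append, List.mem_replicate, List.mem_singleton,
              mem_flatten_replicate_iff, List.mem_cons, List.not_mem_nil, or_false] at hy
            tauto
          · simp [List.count_append, List.count_replicate, count_join_replicate] <;> omega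
          · simp [List.length_append, List.length_replicate, length_join_replicate] <;> omega
          · refine avoid_append' ((n:ℤ)-5+2*(d:ℤ)) (avoid_replicate (fun j h1 h2 => by apply notFz hn <;> omega))
              (by simp only [List.sum_replicate, nsmul_eq_mul]; omega) ?_
            exact avoid_replicate (fun j h1 h2 => by apply notFz hn <;> omega)
      · -- (-1,n-5,n-5)
        rcases Nat.eq_zero_or_pos d with hd0 | hd1
        · exfalso
          have hX := eq_n_mul hn0 hk (0) (by push_cast; omega) (by push_cast; omega)
          omega
        rcases Nat.eq_zero_or_pos D with hD0 | hD1
        · exfalso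
          have hX := eq_n_mul hn0 hk (0) (by push_cast; omega) (by push_cast; omega)
          omega
        have hX := eq_n_mul hn0 hk (0) (by push_cast; omega) (by push_cast; omega)
        have hXX : D = 2*d := by omega
        have htri : d = 1 ∨ 2 ≤ d := by omega
        rcases htri with hs | hs
        · refine ⟨(List.replicate (1) (2:ℤ) ++ (List.replicate (1) (-1:ℤ))) ++ [(-1:ℤ)],
              ?_, ?_, ?_, final_of_avoid _ ?_⟩
          · intro y hy
            simp only [List.mem_append, List.mem_replicate, List.mem_singleton,
              mem_flatten_replicate_iff, List.mem_cons, List.not_mem_nil, or_false] at hy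
            tauto
          · simp [List.count_append, List.count_replicate, count_join_replicate] <;> omega
          · simp [List.length_append, List.length_replicate, length_join_replicate] <;> omega
          · refine avoid_append' ((n:ℤ)-3) (avoid_replicate (fun j h1 h2 => by apply notFz hn <;> omega))
              (by simp only [List.sum_replicate, nsmul_eq_mul]; omega) ?_
            exact avoid_replicate (fun j h1 h2 => by apply notFz hn <;> omega)
        · refine ⟨(List.replicate (2) (2:ℤ) ++ (List.replicate (2) (-1:ℤ) ++ (List.flatten (List.replicate (d-2) [(2:ℤ),-1,-1]) ++ (List.replicate (1) (-1:ℤ))))) ++ [(-1:ℤ)],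
              ?_, ?_, ?_, final_of_avoid _ ?_⟩
          · intro y hy
            simp only [List.mem_append, List.mem_replicate, List.mem_singleton,
              mem_flatten_replicate_iff, List.mem_cons, List.not_mem_nil, or_false] at hy
            tauto
          · simp [List.count_append, List.count_replicate, count_join_replicate] <;> omega
          · simp [List.length_append, List.length_replicate, length_join_replicate] <;> omega
          · refine avoid_append' ((n:ℤ)-1) (avoid_replicate (fun j h1 h2 => by apply notFz hn <;> omega))
              (by simp only [List.sum_replicate, nsmul_eq_mul]; omega) ?_
            refine avoid_append' ((n:ℤ)-3) (avoid_replicate (fun j h1 h2 => by apply notFz hn <;> omega))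
              (by simp only [List.sum_replicate, nsmul_eq_mul]; omega) ?_
            refine avoid_append' ((n:ℤ)-3) (avoid_join_replicate (by norm_num)
                (avoid_triple (by apply notFz hn <;> omega) (by apply notFz hn <;> omega)
                  (by apply notFz hn <;> omega)) _)
              (by rw [sum_join_replicate]; norm_num) ?_
            exact avoid_replicate (fun j h1 h2 => by apply notFz hn <;> omega)

lemma oneD (n : ℕ) (hn : 11 ≤ n) (ho : n % 2 = 1) (α β zs ze : ℤ)
    (hα : α = 2 ∨ α = -2) (hβ : β = 1 ∨ β = -1)
    (hzs : zs = 0 ∨ zs = (n:ℤ)-5) (hze : ze = 0 ∨ ze = (n:ℤ)-5)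
    (d D : ℕ) (hd : 2*d + 1 ≤ n) (hD : D ≤ n - 1) (hdD : 0 < d + D)
    (hcong : (n:ℤ) ∣ (zs + α*↑d + β*↑D - ze)) :
    ∃ l : List ℤ, (∀ x ∈ l, x = α ∨ x = β) ∧ l.count α = d ∧ l.length = d + D ∧
      ∀ m : ℕ, 0 < m → m < l.length → ¬ Fz n (zs + (l.take m).sum) := by
  rcases hα with rfl | rfl
  · exact oneDpos n hn ho β zs ze hβ hzs hze d D hd hD hdD hcong
  · obtain ⟨l, hmem, hcnt, hlen, hav⟩ := oneDpos n hn ho (-β) ((n:ℤ)-5-zs) ((n:ℤ)-5-ze)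
      (by rcases hβ with rfl | rfl
          · right; norm_num
          · left; norm_num)
      (by rcases hzs with rfl | rfl
          · right; ring
          · left; ring)
      (by rcases hze with rfl | rfl
          · right; ring
          · left; ring)
      d D hd hD hdD
      (by have h2 : ((n:ℤ)-5-zs) + 2*↑d + (-β)*↑D - ((n:ℤ)-5-ze) =
            -(zs + (-2)*↑d + β*↑D - ze) := by ring
          rw [h2]
          exact dvd_neg.mpr hcong)
    refine ⟨l.map (fun x => -x), ?_, ?_, ?_, ?_⟩
    · intro x hx
      obtain ⟨y, hy, rfl⟩ := List.mem_map.mp hx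
      rcases hmem y hy with rfl | rfl
      · left; norm_num
      · right; ring
    · have hcm := List.count_map_of_injective l (fun x : ℤ => -x)
        (fun a b hab => by simpa using hab) 2
      simpa using hcm.trans hcnt
    · simpa using hlen
    · intro m h0 hm
      rw [List.length_map] at hm
      rw [← List.map_take, sum_map_neg]
      intro hF
      refine hav m h0 hm ?_
      have h4 : ((n:ℤ)-5-zs) + (l.take m).sum = (n:ℤ) - 5 - (zs + -(l.take m).sum) := by ring
      rw [h4]
      exact (Fz_mirror _).mpr hF

lemma toNat_emod_succ (n : ℕ) (hn : 2 ≤ n) (z : ℤ) :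
    ((z+1) % (n:ℤ)).toNat = (((z % (n:ℤ)).toNat) + 1) % n := by
  have h0 : (0:ℤ) < (n:ℤ) := by exact_mod_cast (by omega : 0 < n)
  have h1 : 0 ≤ z % (n:ℤ) := Int.emod_nonneg z (by omega)
  have h2 : z % (n:ℤ) < n := Int.emod_lt_of_pos z h0
  have h1n : (1:ℤ) % (n:ℤ) = 1 := Int.emod_eq_of_lt (by norm_num) (by exact_mod_cast (by omega : 1 < n))
  have h3 : (z+1) % (n:ℤ) = (z % (n:ℤ) + 1) % (n:ℤ) := by
    rw [Int.add_emod z 1, h1n]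
  rcases lt_or_ge (z % (n:ℤ) + 1) (n:ℤ) with hc | hc
  · rw [h3, Int.emod_eq_of_lt (by omega) hc, Nat.mod_eq_of_lt (by omega)]
    omega
  · have hz : z % (n:ℤ) + 1 = (n:ℤ) := by omega
    rw [h3, hz, Int.emod_self]
    have h4 : (z % (n:ℤ)).toNat = n - 1 := by omega
    rw [h4, Nat.sub_add_cancel (by omega), Nat.mod_self]
    simp

lemma val_one_fin {n : ℕ} [NeZero n] (hn : 3 ≤ n) : ((1 : Fin n)).val = 1 := by
  rw [Fin.val_one']
  exact Nat.mod_eq_of_lt (by omega)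

lemma fin_add_one_val {n : ℕ} [NeZero n] (hn : 3 ≤ n) (x : Fin n) :
    (x + 1).val = (x.val + 1) % n := by
  rw [Fin.add_def, val_one_fin hn]

lemma cyc_adj_succ {n : ℕ} [NeZero n] (hn : 3 ≤ n) (x : Fin n) : (cycleGraph n).Adj x (x + 1) := by
  rw [cycleGraph_adj']
  right
  rw [add_sub_cancel_left, val_one_fin hn]

lemma cyc_adj_val {n : ℕ} (hn : 3 ≤ n) {x y : Fin n} (h : (cycleGraph n).Adj x y) :
    (x.val + 1) % n = y.val ∨ (y.val + 1) % n = x.val := by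
  haveI : NeZero n := ⟨by omega⟩
  rw [cycleGraph_adj'] at h
  rcases h with h | h
  · right
    have hxy : x - y = 1 := Fin.ext (by rw [h, val_one_fin hn])
    have : x = y + 1 := by
      have := sub_eq_iff_eq_add.mp hxy
      rwa [add_comm] at this
    rw [this, fin_add_one_val hn]
  · left
    have hxy : y - x = 1 := Fin.ext (by rw [h, val_one_fin hn])
    have : y = x + 1 := by
      have := sub_eq_iff_eq_add.mp hxy
      rwa [add_comm] at this
    rw [this, fin_add_one_val hn]

def cdist (n : ℕ) (a b : ℕ) : ℕ := min (Nat.dist a b) (n - Nat.dist a b)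

lemma cdist_self (n a : ℕ) : cdist n a a = 0 := by
  simp [cdist, Nat.dist]

lemma cdist_step {n : ℕ} (hn : 3 ≤ n) {x y : Fin n} (h : (cycleGraph n).Adj x y)
    (w : Fin n) : cdist n x.val w.val ≤ cdist n y.val w.val + 1 := by
  have hx := x.isLt; have hy := y.isLt; have hw := w.isLt
  rcases cyc_adj_val hn h with h1 | h1
  · rcases lt_or_ge (x.val + 1) n with hc | hc
    · rw [Nat.mod_eq_of_lt hc] at h1
      simp only [cdist, Nat.dist, min_def]
      split_ifs <;> omega
    · have hx1 : x.val + 1 = n := by omega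
      rw [hx1, Nat.mod_self] at h1
      simp only [cdist, Nat.dist, min_def]
      split_ifs <;> omega
  · rcases lt_or_ge (y.val + 1) n with hc | hc
    · rw [Nat.mod_eq_of_lt hc] at h1
      simp only [cdist, Nat.dist, min_def]
      split_ifs <;> omega
    · have hy1 : y.val + 1 = n := by omega
      rw [hy1, Nat.mod_self] at h1
      simp only [cdist, Nat.dist, min_def]
      split_ifs <;> omega

lemma lower_bound {n : ℕ} (hn : 3 ≤ n) {a b : Fin n × Fin n}
    (q : (pathGraph n □ cycleGraph n).Walk a b) :
    Nat.dist a.1.val b.1.val + cdist n a.2.val b.2.val ≤ q.length := by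
  induction q with
  | nil => simp [Nat.dist, cdist]
  | @cons u v w h q ih =>
      rw [Walk.length_cons]
      rcases (boxProd_adj).mp h with ⟨hp, he⟩ | ⟨hc, he⟩
      · have hstep : Nat.dist u.1.val w.1.val ≤ Nat.dist v.1.val w.1.val + 1 := by
          rcases (pathGraph_adj).mp hp with h1 | h1 <;> simp [Nat.dist] <;> omega
        rw [← he] at ih
        omega
      · have hstep := cdist_step hn hc w.2
        rw [← he] at ih
        omega

lemma walk_of_fn {V : Type*} (G : SimpleGraph V) :
    ∀ (L : ℕ) (f : ℕ → V), (∀ i, i < L → G.Adj (f i) (f (i+1))) →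
      ∃ p : G.Walk (f 0) (f L), p.length = L ∧ ∀ w ∈ p.support, ∃ i, i ≤ L ∧ w = f i := by
  intro L
  induction L with
  | zero =>
      intro f _
      exact ⟨Walk.nil, rfl, by simp⟩
  | succ L ih =>
      intro f hadj
      obtain ⟨p, hl, hs⟩ := ih f (fun i hi => hadj i (by omega))
      refine ⟨p.concat (hadj L (by omega)), ?_, ?_⟩
      · simp [hl]
      · intro w hw
        rw [Walk.support_concat, List.mem_append] at hw
        rcases hw with hw | hw
        · obtain ⟨i, hi, rfl⟩ := hs w hw
          exact ⟨i, by omega, rfl⟩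
        · simp at hw
          exact ⟨L+1, le_rfl, hw⟩

lemma transfer (n : ℕ) (hn : 11 ≤ n)
    (c1 r1 c2 r2 : ℕ) (h1 : c1 < n) (h2 : r1 < n) (h3 : c2 < n) (h4 : r2 < n)
    (σ ε : ℤ) (hσ : σ = 1 ∨ σ = -1) (hε : ε = 1 ∨ ε = -1)
    (d D : ℕ) (hcol : (c2:ℤ) = (c1:ℤ) + σ*(D:ℤ))
    (hrow : (((r1:ℤ) + ε*(d:ℤ)) % (n:ℤ)).toNat = r2)
    (zs : ℤ) (hzs : (n:ℤ) ∣ ((c1:ℤ) - 2*(r1:ℤ) - zs))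
    (l : List ℤ) (hl : ∀ x ∈ l, x = -2*ε ∨ x = σ) (hcnt : l.count (-2*ε) = d)
    (hlen : l.length = d + D)
    (havoid : ∀ m : ℕ, 0 < m → m < l.length → ¬ Fz n (zs + (l.take m).sum)) :
    ∃ p : (pathGraph n □ cycleGraph n).Walk (⟨c1,h1⟩, ⟨r1,h2⟩) (⟨c2,h3⟩, ⟨r2,h4⟩),
      p.length = d + D ∧
      ∀ w ∈ p.support, Fz n ((w.1.val:ℤ) - 2*(w.2.val:ℤ)) →
        w = ((⟨c1,h1⟩, ⟨r1,h2⟩) : Fin n × Fin n) ∨ w = ((⟨c2,h3⟩, ⟨r2,h4⟩) : Fin n × Fin n) := by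
  haveI : NeZero n := ⟨by omega⟩
  have hn0 : (0:ℤ) < (n:ℤ) := by exact_mod_cast (by omega : 0 < n)
  have hαβ : (-2*ε) ≠ σ := by
    rcases hε with rfl | rfl <;> rcases hσ with rfl | rfl <;> norm_num
  obtain ⟨hltot, hlsum⟩ := two_count hαβ l hl
  have hcntσ : l.count σ = D := by omega
  have hmemtake : ∀ i, ∀ x ∈ l.take i, x = -2*ε ∨ x = σ :=
    fun i x hx => hl x (List.mem_of_mem_take hx)
  have htc : ∀ i, (l.take i).count (-2*ε) + (l.take i).count σ = (l.take i).length ∧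
      (l.take i).sum = (-2*ε) * (l.take i).count (-2*ε) + σ * (l.take i).count σ :=
    fun i => two_count hαβ _ (hmemtake i)
  have hble : ∀ i, (l.take i).count σ ≤ D := fun i =>
    hcntσ ▸ ((List.take_prefix i l).sublist.count_le σ)
  have hale : ∀ i, (l.take i).count (-2*ε) ≤ d := fun i =>
    hcnt ▸ ((List.take_prefix i l).sublist.count_le (-2*ε))
  have hcolb : ∀ i, 0 ≤ (c1:ℤ) + σ * ((l.take i).count σ : ℤ) ∧
      (c1:ℤ) + σ * ((l.take i).count σ : ℤ) < n := by
    intro i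
    have := hble i
    rcases hσ with rfl | rfl <;> constructor <;> push_cast at hcol ⊢ <;> omega
  have hrowb : ∀ (w : ℤ), 0 ≤ w % (n:ℤ) ∧ w % (n:ℤ) < n :=
    fun w => ⟨Int.emod_nonneg w (by omega), Int.emod_lt_of_pos w hn0⟩
  let colv : ℕ → ℕ := fun i => ((c1:ℤ) + σ * ((l.take i).count σ : ℤ)).toNat
  let rowv : ℕ → ℕ := fun i => (((r1:ℤ) + ε * ((l.take i).count (-2*ε) : ℤ)) % (n:ℤ)).toNat
  have hcv : ∀ i, colv i < n := fun i => by
    have := hcolb i; simp only [colv]; omega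
  have hrv : ∀ i, rowv i < n := fun i => by
    have := hrowb ((r1:ℤ) + ε * ((l.take i).count (-2*ε) : ℤ)); simp only [rowv]; omega
  let f : ℕ → Fin n × Fin n := fun i => (⟨colv i, hcv i⟩, ⟨rowv i, hrv i⟩)
  have hfc : ∀ i, ((f i).1.val : ℤ) = (c1:ℤ) + σ * ((l.take i).count σ : ℤ) := by
    intro i
    have := hcolb i
    simp only [f, colv]
    omega
  have hfr : ∀ i, ((f i).2.val : ℤ) = ((r1:ℤ) + ε * ((l.take i).count (-2*ε) : ℤ)) % (n:ℤ) := by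
    intro i
    have := hrowb ((r1:ℤ) + ε * ((l.take i).count (-2*ε) : ℤ))
    simp only [f, rowv]
    omega
  -- adjacency
  have hadj : ∀ i, i < l.length → (pathGraph n □ cycleGraph n).Adj (f i) (f (i+1)) := by
    intro i hi
    have hx := hl (l[i]'hi) (List.getElem_mem hi)
    have ht : l.take (i+1) = l.take i ++ [l[i]'hi] := by
      rw [List.take_succ, List.getElem?_eq_getElem hi]
      rfl
    rcases hx with hxa | hxs
    · -- vertical step
      have hca : (l.take (i+1)).count (-2*ε) = (l.take i).count (-2*ε) + 1 := by
        rw [ht, List.count_append, hxa]; simp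
      have hcs : (l.take (i+1)).count σ = (l.take i).count σ := by
        rw [ht, List.count_append, hxa]
        simp [List.count_singleton]
        omega
      refine (boxProd_adj).mpr (Or.inr ⟨?_, ?_⟩)
      · rcases hε with rfl | rfl
        · have hval : (f (i+1)).2 = (f i).2 + 1 := by
            apply Fin.ext
            rw [fin_add_one_val (by omega)]
            show rowv (i+1) = (rowv i + 1) % n
            simp only [rowv, hca]
            have he : (r1:ℤ) + 1 * (((l.take i).count (-2*1) : ℕ) + 1 : ℕ) =
                ((r1:ℤ) + 1 * ((l.take i).count (-2*1) : ℕ)) + 1 := by push_cast; ring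
            rw [he, toNat_emod_succ n (by omega)]
          rw [hval]
          exact cyc_adj_succ (by omega) _
        · have hval : (f i).2 = (f (i+1)).2 + 1 := by
            apply Fin.ext
            rw [fin_add_one_val (by omega)]
            show rowv i = (rowv (i+1) + 1) % n
            simp only [rowv, hca]
            have he : (r1:ℤ) + (-1) * ((l.take i).count (-2*(-1)) : ℕ) =
                ((r1:ℤ) + (-1) * (((l.take i).count (-2*(-1)) : ℕ) + 1 : ℕ)) + 1 := by
              push_cast; ring
            rw [he, toNat_emod_succ n (by omega)]
          rw [hval]
          exact ((cycleGraph n).adj_symm (cyc_adj_succ (by omega) _))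
      · apply Fin.ext
        show colv i = colv (i+1)
        simp only [colv, hcs]
    · -- horizontal step
      have hca : (l.take (i+1)).count (-2*ε) = (l.take i).count (-2*ε) := by
        rw [ht, List.count_append, hxs]
        simp [List.count_singleton]
        omega
      have hcs : (l.take (i+1)).count σ = (l.take i).count σ + 1 := by
        rw [ht, List.count_append, hxs]; simp
      refine (boxProd_adj).mpr (Or.inl ⟨?_, ?_⟩)
      · rw [pathGraph_adj]
        have hv1 := hfc i
        have hv2 := hfc (i+1)
        rw [hcs] at hv2
        rcases hσ with rfl | rfl
        · left; push_cast at hv1 hv2 ⊢; omega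
        · right; push_cast at hv1 hv2 ⊢; omega
      · apply Fin.ext
        show rowv i = rowv (i+1)
        simp only [rowv, hca]
  -- endpoints
  have hf0 : f 0 = ((⟨c1,h1⟩, ⟨r1,h2⟩) : Fin n × Fin n) := by
    have e1 : ((f 0).1.val : ℤ) = (c1:ℤ) := by rw [hfc 0]; simp
    have e2 : ((f 0).2.val : ℤ) = (r1:ℤ) := by
      rw [hfr 0]
      simp only [List.take_zero, List.count_nil, Nat.cast_zero, mul_zero, add_zero]
      exact Int.emod_eq_of_lt (by omega) (by exact_mod_cast h2)
    have : (f 0).1 = (⟨c1,h1⟩ : Fin n) := Fin.ext (by exact_mod_cast e1)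
    have : (f 0).2 = (⟨r1,h2⟩ : Fin n) := Fin.ext (by exact_mod_cast e2)
    exact Prod.ext (Fin.ext (by exact_mod_cast e1)) (Fin.ext (by exact_mod_cast e2))
  have hfL : f l.length = ((⟨c2,h3⟩, ⟨r2,h4⟩) : Fin n × Fin n) := by
    have e1 : ((f l.length).1.val : ℤ) = (c2:ℤ) := by
      rw [hfc l.length, List.take_length, hcntσ, hcol]
    have e2 : (f l.length).2.val = r2 := by
      show rowv l.length = r2
      simp only [rowv, List.take_length, hcnt]
      exact hrow
    exact Prod.ext (Fin.ext (by exact_mod_cast e1)) (Fin.ext e2)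
  obtain ⟨p, hplen, hpsup⟩ := walk_of_fn (pathGraph n □ cycleGraph n) l.length f hadj
  refine ⟨(p.copy hf0 hfL), by simp [hplen, hlen], ?_⟩
  intro w hw hFw
  rw [Walk.support_copy] at hw
  obtain ⟨i, hiL, rfl⟩ := hpsup w hw
  rcases Nat.eq_zero_or_pos i with rfl | hi0
  · left; rw [hf0]
  rcases eq_or_lt_of_le hiL with rfl | hiL'
  · right; rw [hfL]
  exfalso
  refine havoid i hi0 hiL' ?_
  have hdvd : (n:ℤ) ∣ (((f i).1.val : ℤ) - 2*((f i).2.val : ℤ) - (zs + (l.take i).sum)) := by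
    rw [hfc i, hfr i, (htc i).2]
    have hmod : (n:ℤ) ∣ (((r1:ℤ) + ε * ((l.take i).count (-2*ε) : ℤ)) -
        ((r1:ℤ) + ε * ((l.take i).count (-2*ε) : ℤ)) % (n:ℤ)) :=
      Int.dvd_self_sub_of_emod_eq rfl
    have hre : (c1:ℤ) + σ * ((l.take i).count σ : ℤ) -
        2*(((r1:ℤ) + ε * ((l.take i).count (-2*ε) : ℤ)) % (n:ℤ)) -
        (zs + ((-2*ε) * ((l.take i).count (-2*ε) : ℤ) + σ * ((l.take i).count σ : ℤ))) =
        ((c1:ℤ) - 2*(r1:ℤ) - zs) + 2*(((r1:ℤ) + ε * ((l.take i).count (-2*ε) : ℤ)) -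
          ((r1:ℤ) + ε * ((l.take i).count (-2*ε) : ℤ)) % (n:ℤ)) := by ring
    rw [hre]
    exact dvd_add hzs (Dvd.dvd.mul_left hmod 2)
  exact (Fz_congr hdvd).mp hFw

end MVaux

open MVaux in
theorem mutualVisibilitySet_even_construction (t : ℕ) (heven : Even t) (ht : 14 ≤ t) :
    IsMutualVisibilitySet (pathGraph (t - 3) □ cycleGraph (t - 3))
      {p : Fin (t - 3) × Fin (t - 3) | ∃ i : Fin (t - 3), ∃ j : Fin 2,
        p = (⟨(2 * i.val + j.val * (t - 8)) % (t - 3),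
              Nat.mod_lt _ (by omega)⟩, i)} ∧
    Set.ncard {p : Fin (t - 3) × Fin (t - 3) | ∃ i : Fin (t - 3), ∃ j : Fin 2,
        p = (⟨(2 * i.val + j.val * (t - 8)) % (t - 3),
              Nat.mod_lt _ (by omega)⟩, i)} = 2 * (t - 3) := by
  have hn : 11 ≤ t - 3 := by omega
  have ho : (t - 3) % 2 = 1 := by
    obtain ⟨k, hk⟩ := heven; omega
  have hmem : ∀ p : Fin (t-3) × Fin (t-3),
      (∃ i : Fin (t - 3), ∃ j : Fin 2, p = (⟨(2 * i.val + j.val * (t - 8)) % (t - 3),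
          Nat.mod_lt _ (by omega)⟩, i)) ↔
      ∃ j : ℕ, j ≤ 1 ∧ p.1.val = (2 * p.2.val + j * (t - 8)) % (t - 3) := by
    intro p
    constructor
    · rintro ⟨i, j, rfl⟩
      exact ⟨j.val, by have := j.isLt; omega, rfl⟩
    · rintro ⟨j, hj, hval⟩
      exact ⟨p.2, ⟨j, by omega⟩, Prod.ext (Fin.ext hval) rfl⟩
  have hfz : ∀ (p : Fin (t-3) × Fin (t-3)) (j : ℕ), j ≤ 1 →
      p.1.val = (2 * p.2.val + j * (t - 8)) % (t - 3) →
      ((t-3 : ℕ):ℤ) ∣ ((p.1.val:ℤ) - 2*(p.2.val:ℤ) - (j:ℤ)*(((t-3 : ℕ):ℤ) - 5)) := by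
    intro p j hj hc
    have hmm : (((2 * p.2.val + j * (t - 8)) : ℕ):ℤ) % ((t-3 : ℕ):ℤ) = (p.1.val:ℤ) := by
      rw [← MVaux.cast_mod, ← hc]
    have hdv := Int.dvd_self_sub_of_emod_eq hmm
    have h58 : ((t-8 : ℕ):ℤ) = ((t-3 : ℕ):ℤ) - 5 := by omega
    have hX : (((2 * p.2.val + j * (t - 8)) : ℕ):ℤ) =
        2*(p.2.val:ℤ) + (j:ℤ)*(((t-3 : ℕ):ℤ)-5) := by
      push_cast
      rw [h58]
    have hgoal : (p.1.val:ℤ) - 2*(p.2.val:ℤ) - (j:ℤ)*(((t-3 : ℕ):ℤ)-5) =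
        -((((2 * p.2.val + j * (t - 8)) : ℕ):ℤ) - (p.1.val:ℤ)) := by rw [hX]; ring
    rw [hgoal]
    exact dvd_neg.mpr hdv
  have hSfz : ∀ p : Fin (t-3) × Fin (t-3),
      (∃ j : ℕ, j ≤ 1 ∧ p.1.val = (2 * p.2.val + j * (t - 8)) % (t - 3)) →
      Fz (t-3) ((p.1.val:ℤ) - 2*(p.2.val:ℤ)) := by
    rintro p ⟨j, hj, hc⟩
    have hd := hfz p j hj hc
    interval_cases j
    · left; simpa using hd
    · right
      have he : (p.1.val:ℤ) - 2*(p.2.val:ℤ) + 5 =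
          ((p.1.val:ℤ) - 2*(p.2.val:ℤ) - 1*(((t-3 : ℕ):ℤ)-5)) + ((t-3 : ℕ):ℤ) := by ring
      rw [he]
      exact dvd_add (by simpa using hd) dvd_rfl
  constructor
  · -- mutual visibility
    intro u hu v hv
    obtain ⟨j1, hj1, hc1⟩ := (hmem u).mp hu
    obtain ⟨j2, hj2, hc2⟩ := (hmem v).mp hv
    by_cases huv : u = v
    · subst huv
      refine ⟨Walk.nil, Walk.IsPath.nil, by simp [SimpleGraph.dist_self], ?_⟩
      intro w hw _
      left
      simpa using hw
    have h1 : u.1.val < t-3 := u.1.isLt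
    have h2 : u.2.val < t-3 := u.2.isLt
    have h3 : v.1.val < t-3 := v.1.isLt
    have h4 : v.2.val < t-3 := v.2.isLt
    -- column data
    set D := Nat.dist u.1.val v.1.val with hDdef
    have hDb : D ≤ t - 3 - 1 := by
      simp only [hDdef, Nat.dist]; omega
    obtain ⟨σ, hσ, hcol⟩ : ∃ σ : ℤ, (σ = 1 ∨ σ = -1) ∧
        ((v.1.val:ℤ) = (u.1.val:ℤ) + σ*(D:ℤ)) := by
      rcases le_or_gt u.1.val v.1.val with h | h
      · refine ⟨1, Or.inl rfl, ?_⟩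
        have hdd : D = v.1.val - u.1.val := by simp only [hDdef, Nat.dist]; omega
        rw [hdd]; omega
      · refine ⟨-1, Or.inr rfl, ?_⟩
        have hdd : D = u.1.val - v.1.val := by simp only [hDdef, Nat.dist]; omega
        rw [hdd]; omega
    -- row data
    set diff := (t - 3 + v.2.val - u.2.val) % (t - 3) with hdiffdef
    have hdiffl : diff < t-3 := Nat.mod_lt _ (by omega)
    have e : (u.2.val + diff) % (t-3) = v.2.val := by
      calc (u.2.val + diff) % (t-3)
          = (u.2.val + (t - 3 + v.2.val - u.2.val)) % (t-3) :=
            Nat.ModEq.add_left u.2.val (Nat.mod_modEq _ _)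
        _ = (t - 3 + v.2.val) % (t-3) := by congr 1; omega
        _ = v.2.val % (t-3) := Nat.add_mod_left _ _
        _ = v.2.val := Nat.mod_eq_of_lt h4
    have hdv : (u.2.val ≤ v.2.val ∧ diff = v.2.val - u.2.val) ∨
        (v.2.val < u.2.val ∧ diff = t - 3 + v.2.val - u.2.val) := by
      rcases le_or_gt u.2.val v.2.val with h | h
      · left
        refine ⟨h, ?_⟩
        rw [hdiffdef]
        have h9 : t - 3 + v.2.val - u.2.val = (t-3) + (v.2.val - u.2.val) := by omega
        rw [h9, Nat.add_mod_left, Nat.mod_eq_of_lt (by omega)]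
      · right
        refine ⟨h, ?_⟩
        rw [hdiffdef, Nat.mod_eq_of_lt (by omega)]
    have ecast : ((u.2.val + diff : ℕ) : ℤ) % ((t-3 : ℕ):ℤ) = (v.2.val : ℤ) := by
      rw [← MVaux.cast_mod, e]
    obtain ⟨ε, d, hε, hd2, hrow, hrowd, hcd, hd0⟩ : ∃ (ε : ℤ) (d : ℕ),
        (ε = 1 ∨ ε = -1) ∧ 2*d+1 ≤ t-3 ∧
        ((((u.2.val:ℤ) + ε*(d:ℤ)) % ((t-3 : ℕ):ℤ)).toNat = v.2.val) ∧
        (((t-3 : ℕ):ℤ) ∣ ((u.2.val:ℤ) + ε*(d:ℤ) - (v.2.val:ℤ))) ∧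
        (cdist (t-3) u.2.val v.2.val = d) ∧ (d = 0 → u.2.val = v.2.val) := by
      rcases lt_or_ge (2*diff) (t-3) with hc | hc
      · refine ⟨1, diff, Or.inl rfl, by omega, ?_, ?_, ?_, ?_⟩
        · have h9 : ((u.2.val:ℤ) + 1*(diff:ℤ)) = ((u.2.val + diff : ℕ) : ℤ) := by push_cast; ring
          rw [h9, ecast]
          simp
        · have h10 := Int.dvd_self_sub_of_emod_eq ecast
          have h9 : ((u.2.val + diff : ℕ) : ℤ) - (v.2.val:ℤ) =
              (u.2.val:ℤ) + 1*(diff:ℤ) - (v.2.val:ℤ) := by push_cast; ring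
          rwa [h9] at h10
        · rcases hdv with ⟨hle, hdd⟩ | ⟨hlt, hdd⟩ <;>
            simp only [cdist, Nat.dist, min_def] <;> split_ifs <;> omega
        · intro hd0
          have := e
          rw [hd0] at this
          simpa [Nat.mod_eq_of_lt h2] using this
      · have hne : 2*diff ≠ t-3 := by omega
        refine ⟨-1, t-3-diff, Or.inr rfl, by omega, ?_, ?_, ?_, ?_⟩
        · have h9 : ((u.2.val:ℤ) + (-1)*((t-3-diff : ℕ):ℤ)) =
              ((u.2.val + diff : ℕ):ℤ) + ((t-3:ℕ):ℤ)*(-1) := by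
            have hcast : ((t-3-diff : ℕ):ℤ) = ((t-3:ℕ):ℤ) - (diff:ℤ) := by omega
            rw [hcast]; push_cast; ring
          rw [h9, Int.add_mul_emod_self_left, ecast]
          simp
        · have h10 := Int.dvd_self_sub_of_emod_eq ecast
          have h9 : (u.2.val:ℤ) + (-1)*((t-3-diff : ℕ):ℤ) - (v.2.val:ℤ) =
              (((u.2.val + diff : ℕ) : ℤ) - (v.2.val:ℤ)) - ((t-3:ℕ):ℤ) := by
            have hcast : ((t-3-diff : ℕ):ℤ) = ((t-3:ℕ):ℤ) - (diff:ℤ) := by omega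
            rw [hcast]; push_cast; ring
          rw [h9]
          exact dvd_sub h10 dvd_rfl
        · rcases hdv with ⟨hle, hdd⟩ | ⟨hlt, hdd⟩ <;>
            simp only [cdist, Nat.dist, min_def] <;> split_ifs <;> omega
        · intro hd0
          omega
    have hdD : 0 < d + D := by
      by_contra hcon
      push_neg at hcon
      have hd0' : d = 0 := by omega
      have hD0' : D = 0 := by omega
      have hr : u.2.val = v.2.val := hd0 hd0'
      have hcc : u.1.val = v.1.val := by
        have := hDdef
        simp only [Nat.dist] at this
        omega
      exact huv (Prod.ext (Fin.ext hcc) (Fin.ext hr))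
    set zs := (j1:ℤ)*(((t-3 : ℕ):ℤ) - 5) with hzsdef
    set ze := (j2:ℤ)*(((t-3 : ℕ):ℤ) - 5) with hzedef
    have F1 := hfz u j1 hj1 hc1
    have F2 := hfz v j2 hj2 hc2
    have hcong : ((t-3 : ℕ):ℤ) ∣ (zs + (-2*ε)*(d:ℤ) + σ*(D:ℤ) - ze) := by
      have hsum := dvd_add (dvd_add (dvd_neg.mpr F1) F2) (Dvd.dvd.mul_left hrowd (-2))
      have heq : -((u.1.val:ℤ) - 2*(u.2.val:ℤ) - (j1:ℤ)*(((t-3 : ℕ):ℤ) - 5)) +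
          ((v.1.val:ℤ) - 2*(v.2.val:ℤ) - (j2:ℤ)*(((t-3 : ℕ):ℤ) - 5)) +
          (-2)*((u.2.val:ℤ) + ε*(d:ℤ) - (v.2.val:ℤ)) =
          zs + (-2*ε)*(d:ℤ) + σ*(D:ℤ) - ze := by
        rw [hzsdef, hzedef, hcol]; ring
      rwa [heq] at hsum
    obtain ⟨l, hl, hcnt, hlen, hav⟩ := oneD (t-3) hn ho (-2*ε) σ zs ze
      (by rcases hε with rfl | rfl
          · right; norm_num
          · left; norm_num)
      hσ
      (by rcases (by omega : j1 = 0 ∨ j1 = 1) with rfl | rfl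
          · left; rw [hzsdef]; ring
          · right; rw [hzsdef]; ring)
      (by rcases (by omega : j2 = 0 ∨ j2 = 1) with rfl | rfl
          · left; rw [hzedef]; ring
          · right; rw [hzedef]; ring)
      d D hd2 hDb hdD hcong
    obtain ⟨p, hplen, hpsup⟩ := transfer (t-3) hn u.1.val u.2.val v.1.val v.2.val
      h1 h2 h3 h4 σ ε hσ hε d D hcol hrow zs F1 l hl hcnt hlen hav
    have hUeq : ((⟨u.1.val, h1⟩, ⟨u.2.val, h2⟩) : Fin (t-3) × Fin (t-3)) = u := rfl
    have hVeq : ((⟨v.1.val, h3⟩, ⟨v.2.val, h4⟩) : Fin (t-3) × Fin (t-3)) = v := rfl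
    let p' : (pathGraph (t-3) □ cycleGraph (t-3)).Walk u v := p.copy hUeq hVeq
    have hp'len : p'.length = d + D := by
      simp only [p', Walk.length_copy]
      exact hplen
    have hdist : (pathGraph (t-3) □ cycleGraph (t-3)).dist u v = d + D := by
      refine le_antisymm ?_ ?_
      · have := SimpleGraph.dist_le p'
        omega
      · obtain ⟨q, hq⟩ := (p'.reachable).exists_walk_length_eq_dist
        have hlow := lower_bound (by omega : 3 ≤ t-3) q
        rw [hq] at hlow
        rw [hcd] at hlow
        omega
    refine ⟨p'.bypass, Walk.bypass_isPath _, ?_, ?_⟩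
    · have hb1 := Walk.length_bypass_le p'
      have hb2 := SimpleGraph.dist_le p'.bypass
      omega
    · intro w hw hwS
      have hfzw := hSfz w ((hmem w).mp hwS)
      have hw' : w ∈ p.support := by
        have hsub := Walk.support_bypass_subset p' hw
        simpa only [p', Walk.support_copy] using hsub
      rcases hpsup w hw' hfzw with h | h
      · left; exact h.trans hUeq
      · right; exact h.trans hVeq
  · -- cardinality
    classical
    have hinj : Function.Injective (fun q : Fin (t-3) × Fin 2 =>
        ((⟨(2 * q.1.val + q.2.val * (t - 8)) % (t - 3), Nat.mod_lt _ (by omega)⟩, q.1) :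
          Fin (t-3) × Fin (t-3))) := by
      rintro ⟨i, j⟩ ⟨i', j'⟩ hq
      simp only [Prod.mk.injEq, Fin.mk.injEq] at hq
      obtain ⟨hq1, hq2⟩ := hq
      subst hq2
      have key : ∀ a b : ℕ, a = 0 → b = 1 →
          (2*i.val + a*(t-8)) % (t-3) = (2*i.val + b*(t-8)) % (t-3) → False := by
        intro a b ha hb hh
        subst ha hb
        simp only [Nat.zero_mul, Nat.add_zero, Nat.one_mul] at hh
        have hmodeq : (2*i.val) ≡ (2*i.val + (t-8)) [MOD (t-3)] := hh
        have hdvd := (Nat.modEq_iff_dvd' (by omega)).mp hmodeq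
        have h8 : 2*i.val + (t-8) - 2*i.val = t-8 := by omega
        rw [h8] at hdvd
        have := Nat.le_of_dvd (by omega) hdvd
        omega
      have hjj : j.val = j'.val := by
        by_contra hne
        have hji := j.isLt
        have hji' := j'.isLt
        rcases (by omega : (j.val = 0 ∧ j'.val = 1) ∨ (j.val = 1 ∧ j'.val = 0)) with
          ⟨ha, hb⟩ | ⟨ha, hb⟩
        · exact key j.val j'.val ha hb hq1
        · exact key j'.val j.val hb ha hq1.symm
      exact Prod.ext rfl (Fin.ext hjj)
    have hset : {p : Fin (t - 3) × Fin (t - 3) | ∃ i : Fin (t - 3), ∃ j : Fin 2,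
        p = (⟨(2 * i.val + j.val * (t - 8)) % (t - 3),
              Nat.mod_lt _ (by omega)⟩, i)} =
        Set.range (fun q : Fin (t-3) × Fin 2 =>
        ((⟨(2 * q.1.val + q.2.val * (t - 8)) % (t - 3), Nat.mod_lt _ (by omega)⟩, q.1) :
          Fin (t-3) × Fin (t-3))) := by
      ext p
      simp only [Set.mem_setOf_eq, Set.mem_range]
      constructor
      · rintro ⟨i, j, rfl⟩
        exact ⟨(i, j), rfl⟩
      · rintro ⟨⟨i, j⟩, rfl⟩
        exact ⟨i, j, rfl⟩
    rw [hset, ← Nat.card_coe_set_eq, Nat.card_range_of_injective hinj]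
    simp only [Nat.card_eq_fintype_card, Fintype.card_prod, Fintype.card_fin]
    ring
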